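/- Let X be a topological space and define F : Opens(X) → Set by F(U) = π₀(U) (the set of path components of U), with F(V ⊆ U) induced by inclusion. Then F is a functor from the poset of open sets of X (ordered by inclusion) to the category of sets, and for any open cover 𝒰 of an open set U that is closed under the property that every finite intersection of members of 𝒰 is a union of members of 𝒰, with each member of 𝒰 path-connected, the universal map colim_{V ∈ 𝒰} π₀(V) → π₀(U) is a bijection. -/

import Mathlib

open TopologicalSpace

/-- The map on path components induced by a continuous map. -/
def pcMap {A B : Type*} [TopologicalSpace A] [TopologicalSpace B]
    {f : A → B} (hf : Continuous f) : ZerothHomotopy A → ZerothHomotopy B :=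
  Quotient.map' f (fun _ _ h => ⟨(Joined.somePath h).map hf⟩)

/-- The map `π₀(V) → π₀(U)` induced by an inclusion of open sets `V ⊆ U`. -/
def pcIncl {X : Type*} [TopologicalSpace X] {V U : Opens X} (h : (V : Set X) ⊆ U) :
    ZerothHomotopy (V : Set X) → ZerothHomotopy (U : Set X) :=
  pcMap (continuous_inclusion h)

/-- `U ↦ π₀(U)` is functorial on open sets of `X` (it sends identity
inclusions to the identity and composed inclusions to composites), and for any
open cover `𝒰` of an open set `U` by path-connected open sets such that every
finite intersection of members of `𝒰` is a union of members of `𝒰`, the cocone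
`{π₀(V) → π₀(U)}_{V ∈ 𝒰}` is a colimit cocone in `Set`: for every compatible
family of maps `ψ_V : π₀(V) → C`, there is a unique `μ : π₀(U) → C` with
`μ ∘ π₀(V ⊆ U) = ψ_V` (i.e. the universal map `colim_{V ∈ 𝒰} π₀(V) → π₀(U)`
is a bijection). -/
theorem pi0_is_constructible_cosheaf {X : Type*} [TopologicalSpace X]
 :
    -- functoriality of `F = π₀`:
    (∀ (U : Opens X), pcIncl (le_refl (U : Set X)) = id) ∧
    (∀ (W V U : Opens X) (hWV : (W : Set X) ⊆ V) (hVU : (V : Set X) ⊆ U),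
      pcIncl (hWV.trans hVU) = pcIncl hVU ∘ pcIncl hWV) ∧
    -- the gluing (cosheaf) axiom:
    ∀ (U : Opens X) (𝒰 : Set (Opens X))
      (hsub : ∀ V ∈ 𝒰, (V : Set X) ⊆ U)
      (hcover : ∀ x ∈ (U : Set X), ∃ V ∈ 𝒰, x ∈ (V : Set X))
      (hpath : ∀ V ∈ 𝒰, IsPathConnected (V : Set X))
      (hinter : ∀ (s : Finset (Opens X)), ↑s ⊆ 𝒰 →
        ∀ x ∈ ⋂ V ∈ s, (V : Set X), ∃ Z ∈ 𝒰, x ∈ (Z : Set X) ∧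
          (Z : Set X) ⊆ ⋂ V ∈ s, (V : Set X))
      (C : Type) (ψ : ∀ V ∈ 𝒰, ZerothHomotopy (V : Set X) → C)
      (hψ : ∀ (V) (hV : V ∈ 𝒰) (W) (hW : W ∈ 𝒰) (hVW : (V : Set X) ⊆ W),
        ψ W hW ∘ pcIncl hVW = ψ V hV),
      ∃! μ : ZerothHomotopy (U : Set X) → C,
        ∀ (V) (hV : V ∈ 𝒰), μ ∘ pcIncl (hsub V hV) = ψ V hV := by
  classical
  refine ⟨fun U => funext fun q => Quotient.inductionOn' q fun a => rfl,
    fun W V U hWV hVU => funext fun q => Quotient.inductionOn' q fun a => rfl, ?_⟩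
  intro U 𝒰 hsub hcover hpath hinter C ψ hψ
  -- ψ V is constant since V is path-connected
  have hconst : ∀ V (hV : V ∈ 𝒰) (a b : ZerothHomotopy (V : Set X)),
      ψ V hV a = ψ V hV b := by
    intro V hV a b
    have hpc : PathConnectedSpace (V : Set X) :=
      isPathConnected_iff_pathConnectedSpace.mp (hpath V hV)
    have hs : Subsingleton (ZerothHomotopy (V : Set X)) :=
      (pathConnectedSpace_iff_zerothHomotopy.mp hpc).2
    exact congrArg _ (Subsingleton.elim a b)
  -- independence of the choice of V containing x
  have hA : ∀ V (hV : V ∈ 𝒰) W (hW : W ∈ 𝒰) (x : X) (hxV : x ∈ (V : Set X))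
      (hxW : x ∈ (W : Set X)),
      ψ V hV (Quotient.mk'' ⟨x, hxV⟩) = ψ W hW (Quotient.mk'' ⟨x, hxW⟩) := by
    intro V hV W hW x hxV hxW
    obtain ⟨Z, hZ𝒰, hxZ, hZs⟩ := hinter ({V, W} : Finset (Opens X)) (by
        intro y hy
        simp only [Finset.coe_insert, Finset.coe_singleton, Set.mem_insert_iff,
          Set.mem_singleton_iff] at hy
        rcases hy with rfl | rfl <;> assumption)
      x (by
        simp only [Set.mem_iInter]
        intro i hi
        simp only [Finset.mem_insert, Finset.mem_singleton] at hi
        rcases hi with rfl | rfl <;> assumption)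
    have hZV : (Z : Set X) ⊆ V := fun y hy => by
      have h := Set.mem_iInter.mp (hZs hy) V
      simpa using Set.mem_iInter.mp (h) (by simp)
    have hZW : (Z : Set X) ⊆ W := fun y hy => by
      have h := Set.mem_iInter.mp (hZs hy) W
      simpa using Set.mem_iInter.mp (h) (by simp)
    have e1 := congrFun (hψ Z hZ𝒰 V hV hZV) (Quotient.mk'' ⟨x, hxZ⟩)
    have e2 := congrFun (hψ Z hZ𝒰 W hW hZW) (Quotient.mk'' ⟨x, hxZ⟩)
    change ψ V hV (pcIncl hZV (Quotient.mk'' ⟨x, hxZ⟩)) = _ at e1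
    change ψ W hW (pcIncl hZW (Quotient.mk'' ⟨x, hxZ⟩)) = _ at e2
    have p1 : pcIncl hZV (Quotient.mk'' ⟨x, hxZ⟩) = Quotient.mk'' ⟨x, hxV⟩ := rfl
    have p2 : pcIncl hZW (Quotient.mk'' ⟨x, hxZ⟩) = Quotient.mk'' ⟨x, hxW⟩ := rfl
    rw [p1] at e1; rw [p2] at e2
    rw [e1, e2]
  -- the value function
  let val : ↥(U : Set X) → C := fun x =>
    ψ (hcover x x.2).choose (hcover x x.2).choose_spec.1
      (Quotient.mk'' ⟨(x : X), (hcover x x.2).choose_spec.2⟩)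
  have hval : ∀ (x : ↥(U : Set X)) V (hV : V ∈ 𝒰) (hxV : (x : X) ∈ (V : Set X)),
      val x = ψ V hV (Quotient.mk'' ⟨(x : X), hxV⟩) :=
    fun x V hV hxV => hA _ (hcover x x.2).choose_spec.1 V hV _ _ hxV
  -- val respects the joined relation
  have hresp : ∀ a b : ↥(U : Set X), Joined a b → val a = val b := by
    intro a b hab
    obtain ⟨γ⟩ := hab
    set f : unitInterval → C := fun t => val (γ t) with hf
    have hlc : IsLocallyConstant f := by
      rw [IsLocallyConstant.iff_exists_open]
      intro t
      obtain ⟨V, hV, hγtV⟩ := hcover (γ t) (γ t).2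
      refine ⟨(fun s => ((γ s : X))) ⁻¹' (V : Set X), (V.2.preimage
        (continuous_subtype_val.comp γ.continuous)), hγtV, fun s hs => ?_⟩
      show val (γ s) = val (γ t)
      rw [hval (γ s) V hV hs, hval (γ t) V hV hγtV]
      exact hconst V hV _ _
    have h01 := hlc.apply_eq_of_preconnectedSpace 0 1
    have e0 : f 0 = val a := congrArg val γ.source
    have e1 : f 1 = val b := congrArg val γ.target
    rw [← e0, ← e1]
    exact h01
  refine ⟨Quotient.lift val (fun a b h => hresp a b h), ?_, ?_⟩
  · intro V hV
    funext q
    refine Quotient.inductionOn' q fun a => ?_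
    show Quotient.lift val (fun a b h => hresp a b h) (pcIncl (hsub V hV) (Quotient.mk'' a)) = ψ V hV (Quotient.mk'' a)
    have p : pcIncl (hsub V hV) (Quotient.mk'' a)
        = Quotient.mk'' (⟨(a : X), hsub V hV a.2⟩ : ↥(U : Set X)) := rfl
    rw [p]
    show val _ = _
    rw [hval _ V hV a.2]
  · intro μ' hμ'
    funext q
    refine Quotient.inductionOn' q fun x => ?_
    obtain ⟨V, hV, hxV⟩ := hcover x x.2
    have h2 := congrFun (hμ' V hV) (Quotient.mk'' ⟨(x : X), hxV⟩)
    change μ' (pcIncl (hsub V hV) (Quotient.mk'' ⟨(x : X), hxV⟩)) = _ at h2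
    show μ' (Quotient.mk'' x) = val x
    rw [hval x V hV hxV]
    exact h2
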